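/- Let 𝒟 be a domain space over ℝⁿ in which every domain satisfies the Disjoint Supports Assumption, has convex ID support supp(D_in), and has ID distribution D_in absolutely continuous with respect to Lebesgue measure. Then for any α ∈ (0,1), OOD detection is non-uniformly learnable for 𝒟 in 𝒫(ℝⁿ) via the Convex Hull Procedure: the hypothesis h_M equal to the convex hull of the first M i.i.d. samples from D_in always has OOD risk 0, and its ID risk D_in(ℝⁿ∖h_M) converges to 0 in probability as M → ∞. -/

import Mathlib

open MeasureTheory ENNReal Set Filter

noncomputable section

/-- A domain over an instance space `X` is a pair of (Borel) measures on `X`: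
the ID distribution and the OOD distribution. -/
structure Domain (X : Type*) [MeasurableSpace X] where
  inD : Measure X
  outD : Measure X

namespace Domain

variable {X : Type*} [MeasurableSpace X]

/-- Both components of the domain are probability measures. -/
def IsProb (D : Domain X) : Prop :=
  IsProbabilityMeasure D.inD ∧ IsProbabilityMeasure D.outD

/-- The risk `R^α_D(h) = (1−α)·D_in(X∖h) + α·D_out(h)` of a hypothesis `h ⊆ X`. -/
def risk (D : Domain X) (α : ℝ) (h : Set X) : ℝ≥0∞ :=
  ENNReal.ofReal (1 - α) * D.inD hᶜ + ENNReal.ofReal α * D.outD h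

/-- The ID risk `R^in_D(h) = D_in(X∖h)`. -/
def inRisk (D : Domain X) (h : Set X) : ℝ≥0∞ := D.inD hᶜ

/-- The OOD risk `R^out_D(h) = D_out(h)`. -/
def outRisk (D : Domain X) (h : Set X) : ℝ≥0∞ := D.outD h

end Domain

/-- The distribution of `N` i.i.d. samples from `μ`. -/
def iidSamples {X : Type*} [MeasurableSpace X] (μ : Measure X) (N : ℕ) :
    Measure (Fin N → X) :=
  Measure.pi fun _ => μ

/-- A (deterministic) learning algorithm: given accuracy `ε`, confidence `δ`, a sample size
and a tuple of samples, it outputs a hypothesis. -/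
abbrev Learner (X : Type*) : Type _ := ℝ → ℝ → (n : ℕ) → (Fin n → X) → Set X

/-- Uniform learnability of OOD detection for the domain space `𝒟` in the hypothesis space `H`,
with a priori known OOD probability `α`: there are a sample-complexity function `N(ε,δ)` and a
learner which, for every `ε, δ ∈ (0,1/2)` and every domain `D ∈ 𝒟`, given `N(ε,δ)` i.i.d.
samples from `D_in`, outputs with probability at least `1−δ` a hypothesis in `H` whose risk is
within `ε` of the best risk achievable in `H`. -/
def UniformlyLearnable {X : Type*} [MeasurableSpace X]
    (𝒟 : Set (Domain X)) (H : Set (Set X)) (α : ℝ) : Prop :=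
  ∃ (N : ℝ → ℝ → ℕ) (A : Learner X),
    (∀ ε δ n S, A ε δ n S ∈ H) ∧
    ∀ ε δ : ℝ, 0 < ε → ε < 1/2 → 0 < δ → δ < 1/2 →
      ∀ D ∈ 𝒟,
        ENNReal.ofReal (1 - δ) ≤
          iidSamples D.inD (N ε δ)
            {S | D.risk α (A ε δ (N ε δ) S) ≤ (⨅ h' ∈ H, D.risk α h') + ENNReal.ofReal ε}

/-- Non-uniform learnability of OOD detection: as in `UniformlyLearnable`, except that the
number of samples the learner needs may depend on the domain `D ∈ 𝒟`. -/
def NonUniformlyLearnable {X : Type*} [MeasurableSpace X]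
    (𝒟 : Set (Domain X)) (H : Set (Set X)) (α : ℝ) : Prop :=
  ∃ A : Learner X,
    (∀ ε δ n S, A ε δ n S ∈ H) ∧
    ∀ ε δ : ℝ, 0 < ε → ε < 1/2 → 0 < δ → δ < 1/2 →
      ∀ D ∈ 𝒟, ∃ N : ℕ,
        ENNReal.ofReal (1 - δ) ≤
          iidSamples D.inD N
            {S | D.risk α (A ε δ N S) ≤ (⨅ h' ∈ H, D.risk α h') + ENNReal.ofReal ε}

/-- The support of a measure on a topological space: the set of points all of whose open
neighbourhoods have positive measure. -/
def msupport {X : Type*} [MeasurableSpace X] [TopologicalSpace X] (μ : Measure X) : Set X :=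
  {x | ∀ U : Set X, IsOpen U → x ∈ U → 0 < μ U}

/-- The Disjoint Supports Assumption. -/
def Domain.DSA {X : Type*} [MeasurableSpace X] [TopologicalSpace X] (D : Domain X) : Prop :=
  msupport D.inD ∩ msupport D.outD = ∅

/-- The instance space `ℝⁿ`. -/
abbrev Euc (n : ℕ) : Type := EuclideanSpace ℝ (Fin n)

/-- The (extended) distance between two sets. -/
def setEDist {X : Type*} [PseudoEMetricSpace X] (A B : Set X) : ℝ≥0∞ :=
  ⨅ x ∈ A, EMetric.infEdist x B

/-- The `τ`-Far Supports Assumption: the supports of the ID and OOD distributions are at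
distance more than `τ`. -/
def Domain.FSA {n : ℕ} (D : Domain (Euc n)) (τ : ℝ) : Prop :=
  ENNReal.ofReal τ < setEDist (msupport D.inD) (msupport D.outD)

/-- The Bounded ID Support Assumption: the support of the ID distribution has diameter
less than `R`. -/
def Domain.BoundedID {n : ℕ} (D : Domain (Euc n)) (R : ℝ) : Prop :=
  EMetric.diam (msupport D.inD) < ENNReal.ofReal R



/-! ### Auxiliary lemmas -/

section Support
variable {X : Type*} [MeasurableSpace X] [TopologicalSpace X]

lemma msupport_compl_eq (μ : Measure X) :
    (msupport μ)ᶜ = ⋃₀ {U | IsOpen U ∧ μ U = 0} := by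
  ext x
  simp only [msupport, mem_compl_iff, mem_setOf_eq, mem_sUnion]
  constructor
  · intro h
    push_neg at h
    obtain ⟨U, hU, hxU, hle⟩ := h
    exact ⟨U, ⟨hU, le_antisymm hle zero_le⟩, hxU⟩
  · rintro ⟨U, ⟨hU, hU0⟩, hxU⟩ h
    exact absurd hU0 (h U hU hxU).ne'

lemma isClosed_msupport (μ : Measure X) : IsClosed (msupport μ) := by
  rw [← isOpen_compl_iff, msupport_compl_eq]
  exact isOpen_sUnion fun U hU => hU.1

lemma measure_compl_msupport [SecondCountableTopology X] (μ : Measure X) :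
    μ (msupport μ)ᶜ = 0 := by
  rw [msupport_compl_eq]
  obtain ⟨T, hTc, hTsub, hT⟩ :=
    TopologicalSpace.isOpen_sUnion_countable {U | IsOpen U ∧ μ U = 0} (fun s hs => hs.1)
  rw [← hT, measure_sUnion_null_iff hTc]
  exact fun U hU => (hTsub hU).2
end Support

section Coord
variable {n : ℕ}

lemma abs_coord_le_norm (y : Euc n) (i : Fin n) : |y i| ≤ ‖y‖ := by
  rw [EuclideanSpace.norm_eq, ← Real.sqrt_sq_eq_abs]
  apply Real.sqrt_le_sqrt
  calc y i ^ 2 = ‖y i‖ ^ 2 := by rw [Real.norm_eq_abs, sq_abs]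
    _ ≤ ∑ j, ‖y j‖ ^ 2 :=
      Finset.single_le_sum (f := fun j => ‖y j‖ ^ 2) (fun j _ => sq_nonneg _) (Finset.mem_univ i)

lemma euc_sum_single (y : Euc n) : ∑ i, y i • EuclideanSpace.single i (1:ℝ) = y := by
  have := (EuclideanSpace.basisFun (Fin n) ℝ).toBasis.sum_repr y
  simpa [EuclideanSpace.basisFun_repr] using this
end Coord

section RatFun
variable {n : ℕ}

def ratFun (c : Fin n → ℚ) (y : Euc n) : ℝ := ∑ i, (c i : ℝ) * y i

lemma isLinearMap_ratFun (c : Fin n → ℚ) : IsLinearMap ℝ (ratFun c) := by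
  constructor
  · intro x y
    simp only [ratFun]
    rw [← Finset.sum_add_distrib]
    refine Finset.sum_congr rfl fun i _ => ?_
    have : (x + y) i = x i + y i := rfl
    rw [this]; ring
  · intro a x
    simp only [ratFun, smul_eq_mul, Finset.mul_sum]
    refine Finset.sum_congr rfl fun i _ => ?_
    have : (a • x) i = a * x i := rfl
    rw [this]; ring

lemma continuous_ratFun (c : Fin n → ℚ) : Continuous (ratFun c) := by
  unfold ratFun
  exact continuous_finset_sum _ fun i _ =>
    (continuous_const.mul ((EuclideanSpace.proj (𝕜 := ℝ) i).continuous))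

lemma exists_ratFun_close (f : Euc n →L[ℝ] ℝ) {η R : ℝ} (hη : 0 < η) (hR : 0 < R) :
    ∃ c : Fin n → ℚ, ∀ y : Euc n, ‖y‖ ≤ R → |ratFun c y - f y| ≤ η := by
  have hpos : 0 < η / ((n + 1) * R) := by positivity
  choose c hc using fun i : Fin n =>
    exists_rat_near (f (EuclideanSpace.single i (1:ℝ))) hpos
  refine ⟨c, fun y hy => ?_⟩
  have hf : f y = ∑ i, y i * f (EuclideanSpace.single i 1) := by
    conv_lhs => rw [← euc_sum_single y]
    rw [map_sum]
    exact Finset.sum_congr rfl fun i _ => by rw [f.map_smul, smul_eq_mul]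
  rw [ratFun, hf, ← Finset.sum_sub_distrib]
  calc |∑ i, ((c i : ℝ) * y i - y i * f (EuclideanSpace.single i 1))|
      ≤ ∑ i, |(c i : ℝ) * y i - y i * f (EuclideanSpace.single i 1)| :=
        Finset.abs_sum_le_sum_abs _ _
    _ ≤ ∑ _i : Fin n, η / (n + 1) := by
        refine Finset.sum_le_sum fun i _ => ?_
        have h1 : (c i : ℝ) * y i - y i * f (EuclideanSpace.single i 1)
            = (↑(c i) - f (EuclideanSpace.single i 1)) * y i := by ring
        rw [h1, abs_mul]
        have h2 : |(c i : ℝ) - f (EuclideanSpace.single i 1)| ≤ η / ((n + 1) * R) := by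
          have := hc i
          rw [abs_sub_comm] at this
          exact this.le
        have h3 : |y i| ≤ R := (abs_coord_le_norm y i).trans hy
        calc |(c i : ℝ) - f (EuclideanSpace.single i 1)| * |y i|
            ≤ (η / ((n + 1) * R)) * R := by
              apply mul_le_mul h2 h3 (abs_nonneg _)
              positivity
          _ = η / (n + 1) := by field_simp
    _ ≤ η := by
        rw [Finset.sum_const, Finset.card_univ, Fintype.card_fin, nsmul_eq_mul]
        have hn : (0:ℝ) < (n:ℝ) + 1 := by positivity
        rw [mul_div_assoc']
        rw [div_le_iff₀ hn]
        nlinarith [hη.le]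
end RatFun

section Sep
variable {n M : ℕ}

lemma notMem_convexHull_iff (S : Fin M → Euc n) (x : Euc n) :
    x ∉ convexHull ℝ (Set.range S) ↔
      ∃ (c : Fin n → ℚ) (q : ℚ), (∀ i, ratFun c (S i) < q) ∧ (q : ℝ) < ratFun c x := by
  constructor
  · intro hx
    obtain ⟨f, u, hfa, hfx⟩ := _root_.geometric_hahn_banach_closed_point
      (convex_convexHull ℝ _) ((Set.finite_range S).isClosed_convexHull (𝕜 := ℝ)) hx
    set η := (f x - u) / 4 with hηdef
    have hη0 : 0 < η := by simp only [hηdef]; linarith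
    set R := 1 + ‖x‖ + ∑ i, ‖S i‖ with hRdef
    have hR0 : 0 < R := by
      have : (0:ℝ) ≤ ∑ i, ‖S i‖ := Finset.sum_nonneg fun i _ => norm_nonneg _
      have := norm_nonneg x
      simp only [hRdef]; linarith
    obtain ⟨c, hc⟩ := exists_ratFun_close f hη0 hR0
    obtain ⟨q, hq1, hq2⟩ := exists_rat_btwn (show u + η < u + 2 * η by linarith)
    have hxR : ‖x‖ ≤ R := by
      have : (0:ℝ) ≤ ∑ i, ‖S i‖ := Finset.sum_nonneg fun i _ => norm_nonneg _
      simp only [hRdef]; linarith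
    refine ⟨c, q, fun i => ?_, ?_⟩
    · have h1 : f (S i) < u := hfa _ (subset_convexHull ℝ _ (mem_range_self i))
      have hSR : ‖S i‖ ≤ R := by
        have h := Finset.single_le_sum (f := fun j => ‖S j‖) (fun j _ => norm_nonneg _)
          (Finset.mem_univ i)
        have := norm_nonneg x
        simp only [hRdef]; linarith
      have h2 := abs_le.1 (hc (S i) hSR)
      linarith [h2.2, hq1]
    · have h2 := abs_le.1 (hc x hxR)
      have : f x = u + 4 * η := by simp only [hηdef]; ring
      linarith [h2.1, hq2]
  · rintro ⟨c, q, h1, h2⟩ hx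
    have hsub : convexHull ℝ (Set.range S) ⊆ {y : Euc n | ratFun c y ≤ (q:ℝ)} :=
      convexHull_min (by rintro y ⟨i, rfl⟩; exact (h1 i).le)
        (convex_halfSpace_le (isLinearMap_ratFun c) _)
    exact absurd (hsub hx) (not_le.2 h2)

lemma measurableSet_memHull :
    MeasurableSet {p : (Fin M → Euc n) × Euc n | p.2 ∈ convexHull ℝ (Set.range p.1)} := by
  have hcompl : {p : (Fin M → Euc n) × Euc n | p.2 ∈ convexHull ℝ (Set.range p.1)}ᶜ
      = ⋃ (c : Fin n → ℚ) (q : ℚ),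
          ((⋂ i, {p : (Fin M → Euc n) × Euc n | ratFun c (p.1 i) < q}) ∩
            {p | (q : ℝ) < ratFun c p.2}) := by
    ext p
    simp only [mem_compl_iff, mem_setOf_eq, mem_iUnion, mem_inter_iff, mem_iInter]
    exact notMem_convexHull_iff p.1 p.2
  rw [← compl_compl {p : (Fin M → Euc n) × Euc n | p.2 ∈ convexHull ℝ (Set.range p.1)}, hcompl]
  refine MeasurableSet.compl ?_
  refine MeasurableSet.iUnion fun c => MeasurableSet.iUnion fun q => ?_
  refine MeasurableSet.inter (MeasurableSet.iInter fun i => ?_) ?_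
  · exact measurableSet_lt
      (((continuous_ratFun c).comp ((continuous_apply i).comp continuous_fst)).measurable)
      measurable_const
  · exact measurableSet_lt measurable_const
      (((continuous_ratFun c).comp continuous_snd).measurable)

lemma measurable_inRiskFun (μ : Measure (Euc n)) [SFinite μ] :
    Measurable fun S : Fin M → Euc n => μ (convexHull ℝ (Set.range S))ᶜ := by
  have h := measurable_measure_prodMk_left (ν := μ)
    (measurableSet_memHull (n := n) (M := M)).compl
  have heq : ∀ S : Fin M → Euc n,
      Prod.mk S ⁻¹' {p : (Fin M → Euc n) × Euc n | p.2 ∈ convexHull ℝ (Set.range p.1)}ᶜ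
        = (convexHull ℝ (Set.range S))ᶜ := by
    intro S; ext x; simp [Set.preimage, Set.mem_compl_iff]
  simpa only [heq] using h
end Sep

section Cross
variable {n : ℕ}

def crossP (x : Euc n) (s : ℝ) : Option (Fin n × Bool) → Euc n
  | none => x
  | some (i, b) => x + (if b then s else -s) • EuclideanSpace.single i (1:ℝ)

lemma crossP_mem_ball {x : Euc n} {s r : ℝ} (hs : 0 < s) (hsr : s < r) (j) :
    crossP x s j ∈ Metric.ball x r := by
  rcases j with _ | ⟨i, b⟩
  · simpa [crossP] using hs.trans hsr
  · simp only [crossP, Metric.mem_ball, dist_eq_norm, add_sub_cancel_left]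
    rw [norm_smul, EuclideanSpace.norm_single]
    rcases b with _ | _ <;> simp <;> rw [abs_of_pos hs] <;> exact hsr

lemma ball_subset_hull_crossP (x : Euc n) {s : ℝ} (hs : 0 < s) :
    Metric.ball x (s / (n + 1)) ⊆ convexHull ℝ (Set.range (crossP x s)) := by
  intro y hy
  set c : Euc n := y - x with hc
  have hcoord : ∀ i, c i = y i - x i := fun i => rfl
  have hnorm : ‖c‖ < s / (n + 1) := by
    simpa [hc, dist_eq_norm] using hy
  have habs : ∀ i, |c i| < s / (n + 1) := fun i => (abs_coord_le_norm c i).trans_lt hnorm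
  have hsum : ∑ i, |c i| ≤ n * (s / (n + 1)) := by
    calc ∑ i, |c i| ≤ ∑ _i : Fin n, s / (n + 1) :=
          Finset.sum_le_sum fun i _ => (habs i).le
      _ = n * (s / (n + 1)) := by
          rw [Finset.sum_const, Finset.card_univ, Fintype.card_fin, nsmul_eq_mul]
  have hsums : ∑ i, |c i| ≤ s := by
    have hn : (0:ℝ) < (n:ℝ) + 1 := by positivity
    have : (n:ℝ) * (s / (n + 1)) ≤ s := by
      rw [mul_div_assoc', div_le_iff₀ hn]; nlinarith
    linarith
  classical
  set w : Option (Fin n × Bool) → ℝ := fun j =>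
    match j with
    | none => 1 - (∑ i, |c i|) / s
    | some (i, b) => (if b then max (c i) 0 else max (-(c i)) 0) / s
    with hw
  have hw_nonneg : ∀ j, 0 ≤ w j := by
    rintro (_ | ⟨i, b⟩)
    · simp only [hw]
      have : (∑ i, |c i|) / s ≤ 1 := by rw [div_le_one hs]; exact hsums
      linarith
    · simp only [hw]
      positivity
  have hw_sum : ∑ j, w j = 1 := by
    rw [Fintype.sum_option]
    have h1 : ∑ z : Fin n × Bool, w (some z) = (∑ i, |c i|) / s := by
      rw [Fintype.sum_prod_type]
      have hb : ∀ i : Fin n, ∑ b : Bool, w (some (i, b)) = |c i| / s := by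
        intro i
        rw [Fintype.sum_bool]
        simp only [hw, reduceIte, Bool.false_eq_true, Bool.true_eq_false, if_false, if_true]
        rw [← add_div]
        congr 1
        rcases le_total (c i) 0 with h | h
        · rw [max_eq_right h, max_eq_left (by linarith), abs_of_nonpos h]; simp
        · rw [max_eq_left h, max_eq_right (by linarith), abs_of_nonneg h]; simp
      rw [Finset.sum_congr rfl fun i _ => hb i, ← Finset.sum_div]
    simp only [hw] at h1 ⊢
    rw [h1]
    have hne : s ≠ 0 := hs.ne'
    field_simp
    ring
  have hkey : ∑ j, w j • crossP x s j = y := by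
    rw [Fintype.sum_option]
    have hsome : ∀ z : Fin n × Bool, w (some z) • crossP x s (some z)
        = w (some z) • x + (w (some z) * (if z.2 then s else -s)) • EuclideanSpace.single z.1 (1:ℝ) := by
      rintro ⟨i, b⟩
      simp only [crossP, smul_add, smul_smul]
    rw [Finset.sum_congr rfl fun z _ => hsome z, Finset.sum_add_distrib, ← Finset.sum_smul]
    have hx : ∀ u v : Euc n, w none • u + ((∑ z : Fin n × Bool, w (some z)) • u + v) = (w none + ∑ z : Fin n × Bool, w (some z)) • u + v := by
      intro u v; rw [add_smul]; abel
    show w none • x + _ = y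
    rw [hx]
    have hws : w none + ∑ z : Fin n × Bool, w (some z) = 1 := by
      have := hw_sum
      rwa [Fintype.sum_option] at this
    rw [hws, one_smul]
    have hc2 : ∑ z : Fin n × Bool, (w (some z) * (if z.2 then s else -s)) • EuclideanSpace.single z.1 (1:ℝ) = c := by
      rw [Fintype.sum_prod_type]
      have hb : ∀ i : Fin n, ∑ b : Bool, (w (some (i, b)) * (if b then s else -s)) • EuclideanSpace.single i (1:ℝ)
          = c i • EuclideanSpace.single i (1:ℝ) := by
        intro i
        rw [Fintype.sum_bool]
        simp only [hw, reduceIte, Bool.false_eq_true, Bool.true_eq_false, if_false, if_true]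
        rw [← add_smul]
        congr 1
        have e1 : max (c i) 0 / s * s = max (c i) 0 := div_mul_cancel₀ _ hs.ne'
        have e2 : max (-c i) 0 / s * (-s) = -(max (-c i) 0) := by
          field_simp
        rw [e1, e2]
        rcases le_total (c i) 0 with h | h
        · rw [max_eq_right h, max_eq_left (by linarith)]; ring
        · rw [max_eq_left h, max_eq_right (by linarith)]; ring
      rw [Finset.sum_congr rfl fun i _ => hb i]
      have := euc_sum_single c
      simpa using this
    rw [hc2]
    simp [hc]
  have hmem := Finset.centerMass_mem_convexHull (Finset.univ) (fun j _ => hw_nonneg j)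
    (by rw [hw_sum]; norm_num) (fun j (_ : j ∈ Finset.univ) => Set.mem_range_self (f := crossP x s) j)
  rwa [Finset.centerMass_eq_of_sum_1 _ _ hw_sum, hkey] at hmem
end Cross

section Stab
variable {n : ℕ}

lemma hull_stability {x : Euc n} {s : ℝ} (hs : 0 < s)
    (q : Option (Fin n × Bool) → Euc n)
    (hq : ∀ j, dist (q j) (crossP x s j) < s / (n + 1) / 4) :
    x ∈ convexHull ℝ (Set.range q) := by
  by_contra hx
  obtain ⟨f, u, hfa, hfx⟩ := _root_.geometric_hahn_banach_closed_point
    (convex_convexHull ℝ _) ((Set.finite_range q).isClosed_convexHull (𝕜 := ℝ)) hx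
  set ρ := s / (n + 1) with hρdef
  set δ := ρ / 4 with hδdef
  have hρ : 0 < ρ := by positivity
  have hqu : ∀ j, f (q j) < u := fun j => hfa _ (subset_convexHull ℝ _ (mem_range_self j))
  have hf0 : f ≠ 0 := by
    intro h
    have h1 := hqu none
    rw [h] at h1 hfx
    simp only [ContinuousLinearMap.zero_apply] at h1 hfx
    linarith
  have hfn : 0 < ‖f‖ := norm_pos_iff.2 hf0
  obtain ⟨z, hz1, hz2⟩ := f.exists_lt_apply_of_lt_opNorm (show ‖f‖ / 2 < ‖f‖ by linarith)
  set z' := if 0 ≤ f z then z else -z with hz'def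
  have hz'1 : ‖z'‖ < 1 := by
    rw [hz'def]; split <;> simpa
  have hz'2 : ‖f‖ / 2 < f z' := by
    rw [Real.norm_eq_abs] at hz2
    rw [hz'def]; split <;> rename_i h
    · rwa [abs_of_nonneg h] at hz2
    · rw [map_neg]; rw [abs_of_neg (not_le.1 h)] at hz2; linarith
  have hy : x + ρ • z' ∈ convexHull ℝ (Set.range (crossP x s)) := by
    apply ball_subset_hull_crossP x hs
    simp only [Metric.mem_ball, dist_eq_norm, add_sub_cancel_left]
    rw [norm_smul, Real.norm_eq_abs, abs_of_pos hρ]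
    calc ρ * ‖z'‖ < ρ * 1 := by exact mul_lt_mul_of_pos_left hz'1 hρ
      _ = ρ := mul_one ρ
  have hhalf : convexHull ℝ (Set.range (crossP x s)) ⊆ {y : Euc n | f y ≤ u + ‖f‖ * δ} := by
    apply convexHull_min ?_ (convex_halfSpace_le ⟨f.map_add, f.map_smul⟩ _)
    rintro _ ⟨j, rfl⟩
    have h1 : f (crossP x s j) = f (q j) + f (crossP x s j - q j) := by
      rw [← map_add]; congr 1; abel
    have h2 : f (crossP x s j - q j) ≤ ‖f‖ * ‖crossP x s j - q j‖ :=
      (le_abs_self _).trans (by rw [← Real.norm_eq_abs]; exact f.le_opNorm _)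
    have h3 : ‖crossP x s j - q j‖ ≤ δ := by
      rw [← dist_eq_norm, dist_comm]; exact (hq j).le
    have h4 : ‖f‖ * ‖crossP x s j - q j‖ ≤ ‖f‖ * δ :=
      mul_le_mul_of_nonneg_left h3 hfn.le
    have := hqu j
    simp only [mem_setOf_eq]
    linarith [h1, h2, h4]
  have hcontr := hhalf hy
  simp only [mem_setOf_eq, map_add, _root_.map_smul, smul_eq_mul] at hcontr
  rw [hδdef] at hcontr
  nlinarith [mul_pos hρ hfn, hfx, hz'2, hρ, hfn]

lemma tendsto_notMemHull (μ : Measure (Euc n)) [IsProbabilityMeasure μ]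
    {x : Euc n} (hx : x ∈ interior (msupport μ)) :
    Tendsto (fun M : ℕ => iidSamples μ M {S | x ∉ convexHull ℝ (Set.range S)})
      atTop (nhds 0) := by
  obtain ⟨r, hr0, hball⟩ := Metric.isOpen_iff.1 isOpen_interior x hx
  set s := r / 2 with hsdef
  have hs : 0 < s := by positivity
  set δ := s / (n + 1) / 4 with hδdef
  have hδ : 0 < δ := by positivity
  have hmem : ∀ j, crossP x s j ∈ msupport μ := fun j =>
    interior_subset (hball (crossP_mem_ball hs (by rw [hsdef]; linarith) j))
  have hpos : ∀ j, 0 < μ (Metric.ball (crossP x s j) δ) := fun j =>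
    hmem j _ Metric.isOpen_ball (Metric.mem_ball_self hδ)
  have hsub : ∀ M : ℕ, {S : Fin M → Euc n | x ∉ convexHull ℝ (Set.range S)}
      ⊆ ⋃ j, Set.univ.pi fun _ : Fin M => (Metric.ball (crossP x s j) δ)ᶜ := by
    intro M S hS
    by_contra hns
    simp only [mem_iUnion, Set.mem_pi, mem_univ, forall_true_left, not_exists, not_forall,
      mem_compl_iff, not_not] at hns
    choose idx hidx using hns
    have hxin : x ∈ convexHull ℝ (Set.range fun j => S (idx j)) := by
      apply hull_stability hs
      intro j
      have := hidx j
      rw [Metric.mem_ball] at this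
      exact this
    exact hS (convexHull_mono (by rintro _ ⟨j, rfl⟩; exact mem_range_self _) hxin)
  have hprod : ∀ (M : ℕ) (j : Option (Fin n × Bool)),
      iidSamples μ M (Set.univ.pi fun _ : Fin M => (Metric.ball (crossP x s j) δ)ᶜ)
        = (μ (Metric.ball (crossP x s j) δ)ᶜ) ^ M := by
    intro M j
    rw [iidSamples, Measure.pi_pi]
    rw [Finset.prod_const, Finset.card_univ, Fintype.card_fin]
  have hlt1 : ∀ j, μ (Metric.ball (crossP x s j) δ)ᶜ < 1 := by
    intro j
    rw [prob_compl_eq_one_sub measurableSet_ball]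
    exact ENNReal.sub_lt_self one_ne_top one_ne_zero (hpos j).ne'
  refine tendsto_of_tendsto_of_tendsto_of_le_of_le (g := fun _ => (0:ℝ≥0∞))
    (h := fun M => ∑ j : Option (Fin n × Bool), (μ (Metric.ball (crossP x s j) δ)ᶜ) ^ M)
    tendsto_const_nhds ?_ (fun M => zero_le) ?_
  · have := tendsto_finset_sum (Finset.univ : Finset (Option (Fin n × Bool)))
      (fun j _ => ENNReal.tendsto_pow_atTop_nhds_zero_of_lt_one (hlt1 j))
    simpa using this
  · intro M
    calc iidSamples μ M {S | x ∉ convexHull ℝ (Set.range S)}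
        ≤ iidSamples μ M (⋃ j, Set.univ.pi fun _ : Fin M => (Metric.ball (crossP x s j) δ)ᶜ) :=
          measure_mono (hsub M)
      _ ≤ ∑' j, iidSamples μ M (Set.univ.pi fun _ : Fin M => (Metric.ball (crossP x s j) δ)ᶜ) :=
          measure_iUnion_le _
      _ = ∑ j : Option (Fin n × Bool), iidSamples μ M
            (Set.univ.pi fun _ : Fin M => (Metric.ball (crossP x s j) δ)ᶜ) := tsum_fintype _
      _ = ∑ j : Option (Fin n × Bool), (μ (Metric.ball (crossP x s j) δ)ᶜ) ^ M := by
          exact Finset.sum_congr rfl fun j _ => hprod M j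
end Stab

instance iidSamples_isProbabilityMeasure {X : Type*} [MeasurableSpace X] (μ : Measure X)
    [IsProbabilityMeasure μ] (M : ℕ) : IsProbabilityMeasure (iidSamples μ M) := by
  unfold iidSamples; infer_instance

lemma tendsto_inRisk_zero {n : ℕ} (μ : Measure (Euc n)) [IsProbabilityMeasure μ]
    (hconvC : Convex ℝ (msupport μ)) (hcontμ : μ ≪ volume) {ε : ℝ} (hε : 0 < ε) :
    Tendsto (fun M : ℕ => iidSamples μ M
        {S | ENNReal.ofReal ε < μ (convexHull ℝ (Set.range S))ᶜ})
      atTop (nhds 0) := by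
  have hae : ∀ᵐ x ∂μ, x ∈ interior (msupport μ) := by
    rw [ae_iff]
    have hsub : {a : Euc n | ¬ a ∈ interior (msupport μ)}
        ⊆ (msupport μ)ᶜ ∪ frontier (msupport μ) := by
      intro x hxn
      simp only [mem_setOf_eq] at hxn
      by_cases hxC : x ∈ msupport μ
      · exact Or.inr ⟨subset_closure hxC, hxn⟩
      · exact Or.inl hxC
    exact measure_mono_null hsub (measure_union_null (measure_compl_msupport μ)
        (hcontμ (hconvC.addHaar_frontier volume)))
  set B := fun M : ℕ => {p : (Fin M → Euc n) × Euc n | p.2 ∈ convexHull ℝ (Set.range p.1)}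
    with hB
  have hBm : ∀ M, MeasurableSet (B M) := fun M => measurableSet_memHull
  have hswap : ∀ M : ℕ, ∫⁻ S, μ (convexHull ℝ (Set.range S))ᶜ ∂(iidSamples μ M)
      = ∫⁻ x, iidSamples μ M ((fun S => (S, x)) ⁻¹' (B M)ᶜ) ∂μ := by
    intro M
    have h1 : ∀ S : Fin M → Euc n,
        μ (convexHull ℝ (Set.range S))ᶜ = μ (Prod.mk S ⁻¹' (B M)ᶜ) := by
      intro S
      refine congrArg μ ?_
      ext z; simp [hB]
    calc ∫⁻ S, μ (convexHull ℝ (Set.range S))ᶜ ∂(iidSamples μ M)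
        = ∫⁻ S, μ (Prod.mk S ⁻¹' (B M)ᶜ) ∂(iidSamples μ M) := lintegral_congr h1
      _ = (iidSamples μ M).prod μ (B M)ᶜ := (Measure.prod_apply (hBm M).compl).symm
      _ = ∫⁻ x, iidSamples μ M ((fun S => (S, x)) ⁻¹' (B M)ᶜ) ∂μ :=
          Measure.prod_apply_symm (hBm M).compl
  have hint : Tendsto (fun M : ℕ => ∫⁻ S, μ (convexHull ℝ (Set.range S))ᶜ ∂(iidSamples μ M))
      atTop (nhds 0) := by
    simp only [hswap]
    have hdom := tendsto_lintegral_of_dominated_convergence (μ := μ)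
      (F := fun M x => iidSamples μ M ((fun S => (S, x)) ⁻¹' (B M)ᶜ))
      (f := fun _ => 0) (bound := fun _ => 1)
      (fun M => measurable_measure_prodMk_right (hBm M).compl)
      (fun M => ae_of_all _ fun x => prob_le_one)
      (by simp)
      ?_
    · simpa using hdom
    · filter_upwards [hae] with x hxint
      have heq : ∀ M : ℕ, ((fun S : Fin M → Euc n => (S, x)) ⁻¹' (B M)ᶜ)
          = {S : Fin M → Euc n | x ∉ convexHull ℝ (Set.range S)} := by
        intro M; ext S; simp [hB]
      simp only [heq]
      exact tendsto_notMemHull μ hxint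
  refine tendsto_of_tendsto_of_tendsto_of_le_of_le (g := fun _ => (0:ℝ≥0∞))
    (h := fun M => (∫⁻ S, μ (convexHull ℝ (Set.range S))ᶜ ∂(iidSamples μ M)) / ENNReal.ofReal ε)
    tendsto_const_nhds ?_ (fun M => zero_le) ?_
  · have hmul := ENNReal.Tendsto.mul_const (b := (ENNReal.ofReal ε)⁻¹) hint
      (Or.inr (ENNReal.inv_ne_top.2 (ENNReal.ofReal_pos.2 hε).ne'))
    simp only [zero_mul] at hmul
    simpa [div_eq_mul_inv] using hmul
  · intro M
    refine le_trans (measure_mono (fun S (hS : ENNReal.ofReal ε < μ (convexHull ℝ (Set.range S))ᶜ) => (le_of_lt hS : ENNReal.ofReal ε ≤ _))) ?_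
    exact meas_ge_le_lintegral_div (measurable_inRiskFun μ).aemeasurable
      (ENNReal.ofReal_pos.2 hε).ne' ENNReal.ofReal_ne_top

/-- **OOD detection under DSA, ConvexID and ContID via the Convex Hull Procedure.** If every
domain of `𝒟` has disjoint supports, convex ID support, and absolutely continuous ID
distribution, then OOD detection is non-uniformly learnable for `𝒟`; moreover the convex hull
of the samples always has OOD risk `0`, and its ID risk converges to `0` in probability. -/
theorem convex_hull_nonuniform_learner
    (n : ℕ) (𝒟 : Set (Domain (Euc n))) (hprob : ∀ D ∈ 𝒟, D.IsProb)
    (hdsa : ∀ D ∈ 𝒟, D.DSA)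
    (hconv : ∀ D ∈ 𝒟, Convex ℝ (msupport D.inD))
    (hcont : ∀ D ∈ 𝒟, D.inD ≪ MeasureTheory.volume)
    (α : ℝ) (hα : α ∈ Set.Ioo (0 : ℝ) 1) :
    NonUniformlyLearnable 𝒟 Set.univ α ∧
    (∀ D ∈ 𝒟, ∀ (M : ℕ) (S : Fin M → Euc n), (∀ i, S i ∈ msupport D.inD) →
      D.outRisk (convexHull ℝ (Set.range S)) = 0) ∧
    (∀ D ∈ 𝒟, ∀ ε : ℝ, 0 < ε →
      Filter.Tendsto
        (fun M => iidSamples D.inD M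
          {S | ENNReal.ofReal ε < D.inRisk (convexHull ℝ (Set.range S))})
        Filter.atTop (nhds 0)) := by
  have part2 : ∀ D ∈ 𝒟, ∀ (M : ℕ) (S : Fin M → Euc n), (∀ i, S i ∈ msupport D.inD) →
      D.outRisk (convexHull ℝ (Set.range S)) = 0 := by
    intro D hD M S hS
    have hsub : convexHull ℝ (Set.range S) ⊆ msupport D.inD :=
      convexHull_min (range_subset_iff.2 hS) (hconv D hD)
    have hdisj : msupport D.inD ⊆ (msupport D.outD)ᶜ := by
      intro z hz hz2
      have hmem : z ∈ msupport D.inD ∩ msupport D.outD := ⟨hz, hz2⟩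
      rw [hdsa D hD] at hmem
      exact hmem
    refine le_antisymm ?_ zero_le
    calc D.outD (convexHull ℝ (Set.range S)) ≤ D.outD (msupport D.outD)ᶜ :=
          measure_mono (hsub.trans hdisj)
      _ = 0 := measure_compl_msupport D.outD
  have part3 : ∀ D ∈ 𝒟, ∀ ε : ℝ, 0 < ε →
      Filter.Tendsto
        (fun M => iidSamples D.inD M
          {S | ENNReal.ofReal ε < D.inRisk (convexHull ℝ (Set.range S))})
        Filter.atTop (nhds 0) := by
    intro D hD ε hε
    haveI : IsProbabilityMeasure D.inD := (hprob D hD).1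
    have := tendsto_inRisk_zero D.inD (hconv D hD) (hcont D hD) hε
    simpa only [Domain.inRisk] using this
  refine ⟨?_, part2, part3⟩
  refine ⟨fun _ _ _ S => convexHull ℝ (Set.range S), fun _ _ _ _ => mem_univ _, ?_⟩
  intro ε δ hε hε2 hδ hδ2 D hD
  haveI : IsProbabilityMeasure D.inD := (hprob D hD).1
  have hev : ∀ᶠ M in atTop, iidSamples D.inD M
      {S | ENNReal.ofReal ε < D.inRisk (convexHull ℝ (Set.range S))} < ENNReal.ofReal δ :=
    (part3 D hD ε hε).eventually_lt_const (by simpa using hδ)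
  obtain ⟨N, hN⟩ := hev.exists
  refine ⟨N, ?_⟩
  set C := msupport D.inD with hC
  set G : Set (Fin N → Euc n) := (Set.univ.pi fun _ : Fin N => C) ∩
    {S | D.inRisk (convexHull ℝ (Set.range S)) ≤ ENNReal.ofReal ε} with hG
  have hGsub : G ⊆ {S | D.risk α (convexHull ℝ (Set.range S)) ≤
      (⨅ h' ∈ (Set.univ : Set (Set (Euc n))), D.risk α h') + ENNReal.ofReal ε} := by
    rintro S ⟨hS1, hS2⟩
    have hout : D.outD (convexHull ℝ (Set.range S)) = 0 :=
      part2 D hD N S (fun i => hS1 i (mem_univ i))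
    have hrisk : D.risk α (convexHull ℝ (Set.range S)) ≤ ENNReal.ofReal ε := by
      rw [Domain.risk, hout, mul_zero, add_zero]
      calc ENNReal.ofReal (1 - α) * D.inD (convexHull ℝ (Set.range S))ᶜ
          ≤ 1 * D.inD (convexHull ℝ (Set.range S))ᶜ :=
            mul_le_mul_left (ENNReal.ofReal_le_one.2 (by linarith [hα.1])) _
        _ = D.inD (convexHull ℝ (Set.range S))ᶜ := one_mul _
        _ ≤ ENNReal.ofReal ε := hS2
    exact hrisk.trans le_add_self
  refine le_trans ?_ (measure_mono hGsub)
  have hcompl : iidSamples D.inD N Gᶜ ≤ ENNReal.ofReal δ := by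
    rw [hG, compl_inter]
    refine (measure_union_le _ _).trans ?_
    have h1 : iidSamples D.inD N (Set.univ.pi fun _ : Fin N => C)ᶜ = 0 := by
      have hCmeas : MeasurableSet C := (isClosed_msupport D.inD).measurableSet
      have hC1 : D.inD C = 1 :=
        (prob_compl_eq_zero_iff hCmeas).1 (measure_compl_msupport D.inD)
      have hpi : iidSamples D.inD N (Set.univ.pi fun _ : Fin N => C) = 1 := by
        rw [iidSamples, Measure.pi_pi]
        simp [hC1]
      exact (prob_compl_eq_zero_iff (MeasurableSet.univ_pi fun _ => hCmeas)).2 hpi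
    have h2 : iidSamples D.inD N
        {S | D.inRisk (convexHull ℝ (Set.range S)) ≤ ENNReal.ofReal ε}ᶜ ≤ ENNReal.ofReal δ := by
      refine le_trans (measure_mono ?_) hN.le
      intro S hS
      simp only [mem_compl_iff, mem_setOf_eq, not_le] at hS
      exact hS
    rw [h1, zero_add]
    exact h2
  have h1 : ENNReal.ofReal (1 - δ) ≤ 1 - ENNReal.ofReal δ := by
    refine ENNReal.le_sub_of_add_le_right ENNReal.ofReal_ne_top ?_
    rw [← ENNReal.ofReal_add (by linarith) hδ.le]
    norm_num
  refine h1.trans ?_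
  refine (tsub_le_tsub_left hcompl 1).trans ?_
  have h3 : (1:ℝ≥0∞) ≤ iidSamples D.inD N G + iidSamples D.inD N Gᶜ := by
    rw [← measure_univ (μ := iidSamples D.inD N)]
    refine le_trans (measure_mono ?_) (measure_union_le G Gᶜ)
    rw [union_compl_self]
  exact tsub_le_iff_right.2 h3
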